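/- Let A ∈ ℝ^{n×d} with rank(A) ≥ k, and let R ∈ ℝ^{d×k} have orthonormal columns with d₂(R, V_{A,k}) ≤ ν. Then σ_min(AR) ≥ σ_k(A)·(√(1−ν²) − ν). Moreover, if ν < 1 then rank(AR) = k. -/

import Mathlib

open Matrix MeasureTheory

noncomputable section

/-- Euclidean norm of a vector in `ℝ^n`. -/
def vnorm {n : ℕ} (v : Fin n → ℝ) : ℝ := Real.sqrt (∑ i, v i ^ 2)

/-- Spectral norm of a matrix (operator norm as a map between Euclidean spaces). -/
def spec {m n : ℕ} (M : Matrix (Fin m) (Fin n) ℝ) : ℝ :=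
  ‖LinearMap.toContinuousLinearMap (Matrix.toEuclideanLin M)‖

/-- The four Moore-Penrose conditions. -/
def IsMP {m n : ℕ} (X : Matrix (Fin m) (Fin n) ℝ) (Y : Matrix (Fin n) (Fin m) ℝ) : Prop :=
  X * Y * X = X ∧ Y * X * Y = Y ∧ (X * Y)ᵀ = X * Y ∧ (Y * X)ᵀ = Y * X

/-- The Moore-Penrose pseudoinverse (it always exists and is unique, so this choice-based
definition picks out exactly the Moore-Penrose pseudoinverse). -/
def pinv {m n : ℕ} (X : Matrix (Fin m) (Fin n) ℝ) : Matrix (Fin n) (Fin m) ℝ := by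
  classical exact if h : ∃ Y, IsMP X Y then h.choose else 0

/-- Orthogonal projection onto the column space of a matrix: `P_X = X X⁺`. -/
def projCol {m n : ℕ} (X : Matrix (Fin m) (Fin n) ℝ) : Matrix (Fin m) (Fin m) ℝ := X * pinv X

/-- Distance between column spaces: `d₂(U, W) = ‖P_U - P_W‖₂`. -/
def d2 {m p q : ℕ} (U : Matrix (Fin m) (Fin p) ℝ) (W : Matrix (Fin m) (Fin q) ℝ) : ℝ :=
  spec (projCol U - projCol W)

/-- `(U, s, V)` is a thin SVD of `X`: orthonormal columns, nonincreasing nonnegative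
singular values, and `X = U (diag s) Vᵀ`. -/
def IsThinSVD {m n p : ℕ} (X : Matrix (Fin m) (Fin n) ℝ) (U : Matrix (Fin m) (Fin p) ℝ)
    (s : Fin p → ℝ) (V : Matrix (Fin n) (Fin p) ℝ) : Prop :=
  Uᵀ * U = 1 ∧ Vᵀ * V = 1 ∧ Antitone s ∧ (∀ i, 0 ≤ s i) ∧ X = U * Matrix.diagonal s * Vᵀ

/-- The matrix of the first `k` columns. -/
def firstCols {m p : ℕ} (U : Matrix (Fin m) (Fin p) ℝ) (k : ℕ) (h : k ≤ p) :
    Matrix (Fin m) (Fin k) ℝ := U.submatrix id (Fin.castLE h)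

/-- The matrix of the remaining columns (columns `k+1, …, p` in 1-based indexing). -/
def tailCols {m p : ℕ} (U : Matrix (Fin m) (Fin p) ℝ) (k : ℕ) (h : k ≤ p) :
    Matrix (Fin m) (Fin (p - k)) ℝ :=
  U.submatrix id (fun j => ⟨k + j.1, by have := j.2; omega⟩)

/-- `sv s i` is the `i`-th singular value (1-indexed), `0` past the end. -/
def sv {p : ℕ} (s : Fin p → ℝ) (i : ℕ) : ℝ := by
  classical exact if h : i - 1 < p then s ⟨i - 1, h⟩ else 0

end

noncomputable section

/-- Smallest singular value of a matrix with at least as many rows as columns,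
characterized as the infimum of `‖M x‖` over unit vectors `x`. -/
def smin {m n : ℕ} (M : Matrix (Fin m) (Fin n) ℝ) : ℝ :=
  sInf ((fun x => vnorm (M.mulVec x)) '' {x | vnorm x = 1})

end


section Aux
open Matrix

lemma vnorm_nonneg {n : ℕ} (v : Fin n → ℝ) : 0 ≤ vnorm v := Real.sqrt_nonneg _

lemma vnorm_eq_norm {n : ℕ} (v : Fin n → ℝ) :
    vnorm v = ‖(WithLp.equiv 2 (Fin n → ℝ)).symm v‖ := by
  rw [EuclideanSpace.norm_eq]
  simp [vnorm, Real.norm_eq_abs, sq_abs]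

lemma vnorm_mulVec_le {m n : ℕ} (M : Matrix (Fin m) (Fin n) ℝ) (v : Fin n → ℝ) :
    vnorm (M *ᵥ v) ≤ spec M * vnorm v := by
  rw [vnorm_eq_norm, vnorm_eq_norm, WithLp.equiv_symm_apply, ← Matrix.toEuclideanLin_apply_piLp_toLp]
  exact (LinearMap.toContinuousLinearMap (Matrix.toEuclideanLin M)).le_opNorm _

lemma vnorm_sq {n : ℕ} (v : Fin n → ℝ) : vnorm v ^ 2 = ∑ i, v i ^ 2 :=
  Real.sq_sqrt (Finset.sum_nonneg fun i _ => sq_nonneg _)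

lemma vnorm_smul {n : ℕ} (c : ℝ) (v : Fin n → ℝ) : vnorm (c • v) = |c| * vnorm v := by
  unfold vnorm
  rw [← Real.sqrt_sq_eq_abs, ← Real.sqrt_mul (sq_nonneg c), Finset.mul_sum]
  congr 1
  exact Finset.sum_congr rfl fun i _ => by simp [mul_pow]

lemma vnorm_pos {n : ℕ} {v : Fin n → ℝ} (h : v ≠ 0) : 0 < vnorm v := by
  apply Real.sqrt_pos.2
  obtain ⟨i, hi⟩ := Function.ne_iff.1 h
  exact Finset.sum_pos' (fun j _ => sq_nonneg _)
    ⟨i, Finset.mem_univ i, pow_two_pos_of_ne_zero hi⟩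

lemma dot_mulVec_mulVec {m n : ℕ} (X : Matrix (Fin m) (Fin n) ℝ) (v w : Fin n → ℝ) :
    (X *ᵥ v) ⬝ᵥ (X *ᵥ w) = ((Xᵀ * X) *ᵥ v) ⬝ᵥ w := by
  rw [Matrix.dotProduct_mulVec, ← Matrix.mulVec_transpose, Matrix.mulVec_mulVec,
    ← Matrix.transpose_transpose (Xᵀ * X), Matrix.mulVec_transpose,
    ← Matrix.dotProduct_mulVec]

lemma vnorm_mulVec_orth {m n : ℕ} {X : Matrix (Fin m) (Fin n) ℝ} (hX : Xᵀ * X = 1)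
    (v : Fin n → ℝ) : vnorm (X *ᵥ v) = vnorm v := by
  have h : ∑ i, (X *ᵥ v) i ^ 2 = ∑ i, v i ^ 2 := by
    have h := dot_mulVec_mulVec X v v
    rw [hX, Matrix.one_mulVec] at h
    simpa [dotProduct, sq] using h
  unfold vnorm
  rw [h]

lemma isMP_orth {m n : ℕ} {X : Matrix (Fin m) (Fin n) ℝ} (hX : Xᵀ * X = 1) :
    IsMP X Xᵀ := by
  refine ⟨?_, ?_, ?_, ?_⟩
  · rw [Matrix.mul_assoc, hX, Matrix.mul_one]
  · rw [hX, Matrix.one_mul]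
  · rw [Matrix.transpose_mul, Matrix.transpose_transpose]
  · rw [hX, Matrix.transpose_one]

lemma isMP_unique {m n : ℕ} {X : Matrix (Fin m) (Fin n) ℝ}
    {Y Z : Matrix (Fin n) (Fin m) ℝ} (hY : IsMP X Y) (hZ : IsMP X Z) : Y = Z := by
  obtain ⟨hY1, hY2, hY3, hY4⟩ := hY
  obtain ⟨hZ1, hZ2, hZ3, hZ4⟩ := hZ
  have hXY : X * Y = X * Z := by
    calc X * Y = (X * Y)ᵀ := hY3.symm
    _ = (X * Z * X * Y)ᵀ := by rw [hZ1]
    _ = (X * Y)ᵀ * (X * Z)ᵀ := by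
        rw [← Matrix.transpose_mul, Matrix.mul_assoc, Matrix.mul_assoc]
    _ = X * Y * (X * Z) := by rw [hY3, hZ3]
    _ = X * Y * X * Z := by rw [Matrix.mul_assoc (X * Y)]
    _ = X * Z := by rw [hY1]
  have hYX : Y * X = Z * X := by
    calc Y * X = (Y * X)ᵀ := hY4.symm
    _ = (Y * (X * Z * X))ᵀ := by rw [hZ1]
    _ = (Z * X)ᵀ * (Y * X)ᵀ := by
        rw [← Matrix.transpose_mul]
        simp only [Matrix.mul_assoc]
    _ = Z * X * (Y * X) := by rw [hY4, hZ4]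
    _ = Z * (X * Y * X) := by
        simp only [Matrix.mul_assoc]
    _ = Z * X := by rw [hY1]
  calc Y = Y * X * Y := hY2.symm
  _ = Y * (X * Z) := by rw [Matrix.mul_assoc, ← hXY]
  _ = Y * X * Z := by rw [Matrix.mul_assoc Y]
  _ = Z * X * Z := by rw [hYX]
  _ = Z := hZ2

lemma pinv_eq {m n : ℕ} {X : Matrix (Fin m) (Fin n) ℝ} {Y : Matrix (Fin n) (Fin m) ℝ}
    (hY : IsMP X Y) : pinv X = Y := by
  unfold pinv
  rw [dif_pos ⟨Y, hY⟩]
  exact isMP_unique (Exists.choose_spec ⟨Y, hY⟩) hY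

lemma projCol_orth {m n : ℕ} {X : Matrix (Fin m) (Fin n) ℝ} (hX : Xᵀ * X = 1) :
    projCol X = X * Xᵀ := by
  unfold projCol
  rw [pinv_eq (isMP_orth hX)]

lemma firstCols_orth {m p k : ℕ} {V : Matrix (Fin m) (Fin p) ℝ} (hV : Vᵀ * V = 1)
    (h : k ≤ p) : (firstCols V k h)ᵀ * firstCols V k h = 1 := by
  ext a b
  have h2 : (Vᵀ * V) (Fin.castLE h a) (Fin.castLE h b)
      = (1 : Matrix (Fin p) (Fin p) ℝ) (Fin.castLE h a) (Fin.castLE h b) := by rw [hV]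
  simp only [Matrix.mul_apply, Matrix.one_apply, Matrix.transpose_apply] at h2 ⊢
  simp only [firstCols, Matrix.submatrix_apply, id_eq]
  rw [h2]
  simp [Fin.castLE_inj]

end Aux


lemma core {n d k : ℕ}
    (A : Matrix (Fin n) (Fin d) ℝ)
    (UA : Matrix (Fin n) (Fin (min n d)) ℝ) (sA : Fin (min n d) → ℝ)
    (VA : Matrix (Fin d) (Fin (min n d)) ℝ)
    (hSVD : IsThinSVD A UA sA VA) (hkp : k ≤ min n d)
    (R : Matrix (Fin d) (Fin k) ℝ) (hR : Rᵀ * R = 1)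
    (ν : ℝ) (hdist : d2 R (firstCols VA k hkp) ≤ ν)
    (hkk : k - 1 < min n d)
    (x : Fin k → ℝ) (hx : vnorm x = 1) :
    sA ⟨k - 1, hkk⟩ * Real.sqrt (1 - ν ^ 2) ≤ vnorm ((A * R) *ᵥ x) := by
  obtain ⟨hU, hV, hmono, hsnn, hA⟩ := hSVD
  set Vk := firstCols VA k hkp with hVkdef
  have hVk : Vkᵀ * Vk = 1 := firstCols_orth hV hkp
  set y := R *ᵥ x with hy
  have hy1 : vnorm y = 1 := by rw [hy, vnorm_mulVec_orth hR, hx]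
  set P := Vk * Vkᵀ with hPdef
  set a := P *ᵥ y with ha
  have hPsymm : Pᵀ = P := by rw [hPdef, Matrix.transpose_mul, Matrix.transpose_transpose]
  have hPP : Pᵀ * P = P := by
    rw [hPsymm, hPdef, Matrix.mul_assoc Vk Vkᵀ _, ← Matrix.mul_assoc Vkᵀ Vk Vkᵀ, hVk,
      Matrix.one_mul]
  have hcross : a ⬝ᵥ (y - a) = 0 := by
    have h1 : a ⬝ᵥ a = a ⬝ᵥ y := by rw [ha, dot_mulVec_mulVec, hPP]
    rw [dotProduct_sub, h1, sub_self]
  have hsplit : ∑ i, a i ^ 2 = 1 - ∑ i, (y i - a i) ^ 2 := by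
    have h3 : ∀ i ∈ Finset.univ, y i ^ 2
        = (a i ^ 2 + (y i - a i) ^ 2) + 2 * (a i * (y i - a i)) := fun i _ => by ring
    have h2 : ∑ i, y i ^ 2 = (∑ i, a i ^ 2 + ∑ i, (y i - a i) ^ 2)
        + 2 * ∑ i, a i * (y i - a i) := by
      rw [Finset.sum_congr rfl h3, Finset.sum_add_distrib, Finset.sum_add_distrib,
        ← Finset.mul_sum]
    have h4 : ∑ i, a i * (y i - a i) = a ⬝ᵥ (y - a) := by
      simp [dotProduct, mul_sub, Finset.sum_sub_distrib]
    have h5 : ∑ i, y i ^ 2 = 1 := by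
      have := vnorm_sq y; rw [hy1] at this; simpa using this.symm
    rw [h4, hcross] at h2
    linarith
  have hya : y - a = (projCol R - projCol Vk) *ᵥ y := by
    rw [Matrix.sub_mulVec, projCol_orth hR, projCol_orth hVk, ← hPdef]
    have : (R * Rᵀ) *ᵥ y = y := by
      rw [hy, Matrix.mulVec_mulVec, Matrix.mul_assoc, hR, Matrix.mul_one]
    rw [this]
  have hbound : vnorm (y - a) ≤ ν := by
    rw [hya]
    calc vnorm ((projCol R - projCol Vk) *ᵥ y)
        ≤ spec (projCol R - projCol Vk) * vnorm y := vnorm_mulVec_le _ _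
    _ = d2 R Vk * 1 := by rw [hy1]; rfl
    _ ≤ ν := by rw [mul_one]; exact hdist
  have hν0 : 0 ≤ ν := le_trans (norm_nonneg _) hdist
  have ha2 : 1 - ν ^ 2 ≤ ∑ i, a i ^ 2 := by
    have h6 : ∑ i, (y i - a i) ^ 2 ≤ ν ^ 2 := by
      have h7 := vnorm_sq (y - a)
      have hsq : vnorm (y - a) ^ 2 ≤ ν ^ 2 := pow_le_pow_left₀ (vnorm_nonneg _) hbound 2
      simp only [Pi.sub_apply] at h7
      linarith
    linarith
  set w := Vkᵀ *ᵥ y with hw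
  have haw : ∑ i, a i ^ 2 = ∑ j, w j ^ 2 := by
    have h8 : vnorm a = vnorm w := by
      rw [ha, hPdef, ← Matrix.mulVec_mulVec, ← hw, vnorm_mulVec_orth hVk]
    calc ∑ i, a i ^ 2 = vnorm a ^ 2 := (vnorm_sq a).symm
    _ = vnorm w ^ 2 := by rw [h8]
    _ = ∑ j, w j ^ 2 := vnorm_sq w
  set z := VAᵀ *ᵥ y with hz
  have hwz : ∀ j, w j = z (Fin.castLE hkp j) := by
    intro j
    simp [hw, hz, Matrix.mulVec, hVkdef, firstCols, Matrix.transpose_apply,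
      dotProduct, Matrix.submatrix_apply]
  have hAR : (A * R) *ᵥ x = UA *ᵥ (Matrix.diagonal sA *ᵥ z) := by
    rw [hz, hy, hA]
    simp only [Matrix.mulVec_mulVec, Matrix.mul_assoc]
  set σ := sA ⟨k - 1, hkk⟩ with hσ
  have hσ0 : 0 ≤ σ := hsnn _
  have key : σ ^ 2 * (1 - ν ^ 2) ≤ ∑ i, (Matrix.diagonal sA *ᵥ z) i ^ 2 := by
    calc σ ^ 2 * (1 - ν ^ 2) ≤ σ ^ 2 * ∑ j, w j ^ 2 := by
          apply mul_le_mul_of_nonneg_left _ (sq_nonneg σ)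
          rw [← haw]; exact ha2
    _ = ∑ j, (σ * w j) ^ 2 := by
          rw [Finset.mul_sum]; exact Finset.sum_congr rfl fun j _ => by ring
    _ ≤ ∑ j, (sA (Fin.castLE hkp j) * z (Fin.castLE hkp j)) ^ 2 := by
          apply Finset.sum_le_sum
          intro j _
          rw [hwz j]
          have hle : (Fin.castLE hkp j : Fin (min n d)) ≤ ⟨k - 1, hkk⟩ := by
            rw [Fin.le_def]
            have := j.2
            simp only [Fin.coe_castLE]
            omega
          have hs : σ ≤ sA (Fin.castLE hkp j) := hmono hle
          have h2 : σ ^ 2 ≤ sA (Fin.castLE hkp j) ^ 2 := pow_le_pow_left₀ hσ0 hs 2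
          have := sq_nonneg (z (Fin.castLE hkp j))
          calc (σ * z (Fin.castLE hkp j)) ^ 2 = σ ^ 2 * z (Fin.castLE hkp j) ^ 2 := by ring
          _ ≤ sA (Fin.castLE hkp j) ^ 2 * z (Fin.castLE hkp j) ^ 2 :=
            mul_le_mul_of_nonneg_right h2 this
          _ = (sA (Fin.castLE hkp j) * z (Fin.castLE hkp j)) ^ 2 := by ring
    _ ≤ ∑ i, (sA i * z i) ^ 2 := by
          have hm := Finset.sum_map Finset.univ (Fin.castLEEmb hkp)
            (fun i => (sA i * z i) ^ 2)
          simp only [Fin.castLEEmb_apply] at hm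
          rw [← hm]
          exact Finset.sum_le_sum_of_subset_of_nonneg (Finset.subset_univ _)
            (fun i _ _ => sq_nonneg _)
    _ = ∑ i, (Matrix.diagonal sA *ᵥ z) i ^ 2 :=
          Finset.sum_congr rfl fun i _ => by rw [Matrix.mulVec_diagonal]
  rw [hAR, vnorm_mulVec_orth hU]
  calc σ * Real.sqrt (1 - ν ^ 2) = Real.sqrt (σ ^ 2) * Real.sqrt (1 - ν ^ 2) := by
        rw [Real.sqrt_sq hσ0]
  _ = Real.sqrt (σ ^ 2 * (1 - ν ^ 2)) := (Real.sqrt_mul (sq_nonneg σ) _).symm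
  _ ≤ vnorm (Matrix.diagonal sA *ᵥ z) := by
        unfold vnorm
        exact Real.sqrt_le_sqrt key


/-- Lemma 11, second part. If `R` has `k` orthonormal columns and
`d₂(R, V_{A,k}) ≤ ν`, then `σ_min(A R) ≥ σ_k(A) (√(1−ν²) − ν)`; moreover if `ν < 1`
then `rank(A R) = k`. -/
theorem statement5
    {n d k : ℕ} (hk0 : 0 < k)
    (A : Matrix (Fin n) (Fin d) ℝ)
    (UA : Matrix (Fin n) (Fin (min n d)) ℝ) (sA : Fin (min n d) → ℝ)
    (VA : Matrix (Fin d) (Fin (min n d)) ℝ)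
    (hSVD : IsThinSVD A UA sA VA)
    (hkrank : k ≤ A.rank) (hkp : k ≤ min n d)
    (R : Matrix (Fin d) (Fin k) ℝ) (hR : Rᵀ * R = 1)
    (ν : ℝ) (hdist : d2 R (firstCols VA k hkp) ≤ ν) :
    sv sA k * (Real.sqrt (1 - ν ^ 2) - ν) ≤ smin (A * R) ∧
    (ν < 1 → (A * R).rank = k) := by
  have hkk : k - 1 < min n d := by omega
  obtain ⟨hU, hV, hmono, hsnn, hA⟩ := hSVD
  set σ := sA ⟨k - 1, hkk⟩ with hσdef
  have hσ0 : 0 ≤ σ := hsnn _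
  have hν0 : 0 ≤ ν := le_trans (norm_nonneg _) hdist
  have hsv : sv sA k = σ := by unfold sv; rw [dif_pos hkk]
  have hcore : ∀ x : Fin k → ℝ, vnorm x = 1 →
      σ * Real.sqrt (1 - ν ^ 2) ≤ vnorm ((A * R) *ᵥ x) :=
    fun x hx => core A UA sA VA ⟨hU, hV, hmono, hsnn, hA⟩ hkp R hR ν hdist hkk x hx
  constructor
  · -- smin bound
    have h1 : sv sA k * (Real.sqrt (1 - ν ^ 2) - ν) ≤ σ * Real.sqrt (1 - ν ^ 2) := by
      rw [hsv]
      have : Real.sqrt (1 - ν ^ 2) - ν ≤ Real.sqrt (1 - ν ^ 2) := by linarith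
      exact mul_le_mul_of_nonneg_left this hσ0
    refine le_trans h1 (le_csInf ?_ ?_)
    · have hsum : (∑ i, Pi.single (M := fun _ => ℝ) (⟨0, hk0⟩ : Fin k) 1 i ^ 2) = 1 := by
        simp [Pi.single_apply]
      have hx0 : vnorm (Pi.single (M := fun _ => ℝ) (⟨0, hk0⟩ : Fin k) 1) = 1 := by
        unfold vnorm
        rw [hsum, Real.sqrt_one]
      exact ⟨vnorm ((A * R) *ᵥ Pi.single (M := fun _ => ℝ) (⟨0, hk0⟩ : Fin k) 1),
        ⟨Pi.single (M := fun _ => ℝ) (⟨0, hk0⟩ : Fin k) 1, hx0, rfl⟩⟩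
    · rintro b ⟨x, hx, rfl⟩
      exact hcore x hx
  · -- rank
    intro hν1
    have hσpos : 0 < σ := by
      rcases hσ0.lt_or_eq with h | h
      · exact h
      · exfalso
        have hσ0' : σ = 0 := h.symm
        have hcard : Fintype.card {i : Fin (min n d) // sA i ≠ 0} ≤ k - 1 := by
          have hlt : ∀ i : {i : Fin (min n d) // sA i ≠ 0}, (i : Fin (min n d)).1 < k - 1 := by
            rintro ⟨i, hi⟩
            by_contra hge
            push_neg at hge
            have hle : (⟨k - 1, hkk⟩ : Fin (min n d)) ≤ i := by
              rw [Fin.le_def]; exact hge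
            have h2 : sA i ≤ σ := hmono hle
            exact hi (le_antisymm (by rw [← hσ0']; exact h2) (hsnn i))
          calc Fintype.card {i : Fin (min n d) // sA i ≠ 0}
              ≤ Fintype.card (Fin (k - 1)) := Fintype.card_le_of_injective
                (fun i => ⟨(i : Fin (min n d)).1, hlt i⟩)
                (fun a b hab =>
                  Subtype.ext (Fin.ext (by simpa using congrArg Fin.val hab)))
          _ = k - 1 := Fintype.card_fin _
        have hrA : A.rank ≤ k - 1 := by
          rw [hA]
          calc (UA * Matrix.diagonal sA * VAᵀ).rank
              ≤ (UA * Matrix.diagonal sA).rank := Matrix.rank_mul_le_left _ _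
          _ ≤ (Matrix.diagonal sA).rank := Matrix.rank_mul_le_right _ _
          _ = Fintype.card {i : Fin (min n d) // sA i ≠ 0} := Matrix.rank_diagonal sA
          _ ≤ k - 1 := hcard
        omega
    have hc : 0 < σ * Real.sqrt (1 - ν ^ 2) :=
      mul_pos hσpos (Real.sqrt_pos.2 (by nlinarith))
    have hker : ∀ v : Fin k → ℝ, (A * R) *ᵥ v = 0 → v = 0 := by
      intro v hv
      by_contra hv0
      have hvn : 0 < vnorm v := vnorm_pos hv0
      have hunit : vnorm ((vnorm v)⁻¹ • v) = 1 := by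
        rw [vnorm_smul, abs_of_nonneg (inv_nonneg.2 hvn.le), inv_mul_cancel₀ hvn.ne']
      have h2 := hcore _ hunit
      rw [Matrix.mulVec_smul, hv, smul_zero] at h2
      have h3 : vnorm (0 : Fin n → ℝ) = 0 := by simp [vnorm]
      rw [h3] at h2
      linarith
    have h1 := LinearMap.finrank_range_add_finrank_ker (A * R).mulVecLin
    have h2 : LinearMap.ker (A * R).mulVecLin = ⊥ := by
      rw [LinearMap.ker_eq_bot']
      intro m hm
      exact hker m (by simpa using hm)
    rw [h2, finrank_bot, add_zero] at h1
    rw [Matrix.rank, h1, Module.finrank_pi, Fintype.card_fin]
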